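/- arXiv:1206.1292 — 2 statements merged into one kernel-verified Lean document; each statement's English description precedes it below -/
import Mathlib

section
/- Let Σ_{k∈ℤ} |k|^s |V_k| < ∞ for some s > 0 and let V^{(p)}(z) = Σ_{|k|≤p} V_k z^k be the truncated Fourier series. Then for z on the circle |z| = 1 + 3γ (log p)/p with 0 < 3γ < s − 1/2, the truncations are uniformly bounded: sup_p sup_{|z|=1±3γ log p/p} |V^{(p)}(z)| < ∞. -/
private lemma klogp {k p : ℝ} (hk : 1 ≤ k) (hkp : k ≤ p) :
    k * Real.log p / p ≤ Real.log k + 1 := by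
  have hk0 : (0:ℝ) < k := lt_of_lt_of_le one_pos hk
  have hp0 : (0:ℝ) < p := lt_of_lt_of_le hk0 hkp
  rw [div_le_iff₀ hp0]
  have hlk : 0 ≤ Real.log k := Real.log_nonneg hk
  have h1 : Real.log (p / k) ≤ p / k - 1 := Real.log_le_sub_one_of_pos (by positivity)
  rw [Real.log_div hp0.ne' hk0.ne'] at h1
  have h4 : k * (Real.log p - Real.log k) ≤ p - k := by
    calc k * (Real.log p - Real.log k) ≤ k * (p / k - 1) :=
          mul_le_mul_of_nonneg_left h1 hk0.le
      _ = p - k := by field_simp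
  nlinarith [mul_le_mul_of_nonneg_right hkp hlk]

private lemma zpow_le_max {a : ℝ} (ha : 0 < a) (k : ℤ) :
    a ^ k ≤ (max a a⁻¹) ^ k.natAbs := by
  rcases le_or_gt 0 k with hk | hk
  · lift k to ℕ using hk
    rw [zpow_natCast, Int.natAbs_natCast]
    exact pow_le_pow_left₀ ha.le (le_max_left a a⁻¹) k
  · have h1 : a ^ k = (a⁻¹) ^ k.natAbs := by
      rw [← zpow_natCast, inv_zpow, ← zpow_neg, Int.ofNat_natAbs_of_nonpos hk.le, neg_neg]
    rw [h1]
    exact pow_le_pow_left₀ (by positivity) (le_max_right a a⁻¹) _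

private lemma natAbs_cast_abs (k : ℤ) : |(k:ℝ)| = (k.natAbs : ℝ) := by
  rw [Nat.cast_natAbs, Int.cast_abs]

/-- Uniform bound on the truncated Fourier series `V^{(p)}(z) = Σ_{|k|≤p} V_k z^k` on the
circles `|z| = 1 ± 3γ log p / p`, given `Σ |k|^s |V_k| < ∞` and `0 < 3γ < s − 1/2`. -/
theorem truncation_uniform_bound (V : ℤ → ℂ) (s γ : ℝ)
    (hs : Summable fun k : ℤ => |(k : ℝ)| ^ s * ‖V k‖)
    (hγ0 : 0 < γ) (hγ : 3 * γ < s - 1/2) :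
    ∃ C : ℝ, ∀ p : ℕ, 2 ≤ p → ∀ z : ℂ,
      (‖z‖ = 1 + 3 * γ * Real.log p / p ∨ ‖z‖ = 1 - 3 * γ * Real.log p / p) →
      ‖∑ k ∈ Finset.Icc (-(p : ℤ)) (p : ℤ), V k * z ^ k‖ ≤ C := by
  have hs0 : 0 < s := by linarith
  have h3γ : (0:ℝ) < 3 * γ := by linarith
  have hγs : 3 * γ < s := by linarith
  set c : ℝ := s / (3 * γ) with hcdef
  have hc1 : 1 < c := (one_lt_div h3γ).mpr hγs
  have hc0 : 0 < c := lt_trans one_pos hc1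
  set ε : ℝ := 1 - 1 / c with hεdef
  have hε : 0 < ε := by
    have : 1 / c < 1 := (div_lt_one hc0).mpr hc1
    simp only [hεdef]; linarith
  have hε1 : ε < 1 := by
    have : 0 < 1 / c := by positivity
    simp only [hεdef]; linarith
  -- the threshold p₀ beyond which x_p ≤ ε
  have hlim : Filter.Tendsto (fun p : ℕ => 3 * γ * Real.log p / p) Filter.atTop (nhds 0) := by
    have h1 : Filter.Tendsto (fun x : ℝ => Real.log x / x) Filter.atTop (nhds 0) :=
      Real.isLittleO_log_id_atTop.tendsto_div_nhds_zero
    have h2 : Filter.Tendsto (fun p : ℕ => Real.log p / p) Filter.atTop (nhds 0) :=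
      h1.comp tendsto_natCast_atTop_atTop
    have h3 := h2.const_mul (3 * γ)
    simp only [mul_zero] at h3
    simpa [mul_div_assoc] using h3
  obtain ⟨p₀, hp₀⟩ := Filter.eventually_atTop.1 (hlim.eventually (eventually_le_nhds hε))
  -- summation data
  set A : ℝ := ∑' k : ℤ, |(k:ℝ)| ^ s * ‖V k‖ with hAdef
  have hA0 : 0 ≤ A :=
    tsum_nonneg fun k => mul_nonneg (Real.rpow_nonneg (abs_nonneg _) s) (norm_nonneg _)
  -- crude per-p bound function
  set N : ℕ → ℝ := fun q =>
    max (1 + 3 * γ * Real.log q / q) (max 1 (1 - 3 * γ * Real.log q / q)⁻¹) with hNdef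
  have hN1 : ∀ q, 1 ≤ N q := fun q => le_max_of_le_right (le_max_left _ _)
  set S : ℕ → ℝ := fun q =>
    (∑ k ∈ Finset.Icc (-(q:ℤ)) (q:ℤ), ‖V k‖) * (N q) ^ q with hSdef
  have hS0 : ∀ q, 0 ≤ S q := by
    intro q
    exact mul_nonneg (Finset.sum_nonneg fun k _ => norm_nonneg _)
      (pow_nonneg (le_trans zero_le_one (hN1 q)) q)
  refine ⟨(‖V 0‖ + Real.exp s * A) + ∑ q ∈ Finset.range p₀, S q, ?_⟩
  intro p hp2 z hz
  have hp0R : (0:ℝ) < p := by positivity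
  have hp1R : (1:ℝ) ≤ p := by exact_mod_cast Nat.one_le_of_lt hp2
  have hlogp : 0 ≤ Real.log p := Real.log_nonneg hp1R
  set x : ℝ := 3 * γ * Real.log p / p with hxdef
  have hx0 : 0 ≤ x := by positivity
  -- first reduction
  have hred : ‖∑ k ∈ Finset.Icc (-(p:ℤ)) (p:ℤ), V k * z ^ k‖
      ≤ ∑ k ∈ Finset.Icc (-(p:ℤ)) (p:ℤ), ‖V k‖ * ‖z‖ ^ k := by
    refine le_trans (norm_sum_le _ _) (le_of_eq ?_)
    refine Finset.sum_congr rfl fun k _ => ?_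
    rw [norm_mul, norm_zpow]
  have hmemabs : ∀ k : ℤ, k ∈ Finset.Icc (-(p:ℤ)) (p:ℤ) → k.natAbs ≤ p := by
    intro k hk
    rw [Finset.mem_Icc] at hk
    omega
  rcases lt_or_ge p p₀ with hpP | hpP
  · -- crude regime
    have hkey : ∀ k ∈ Finset.Icc (-(p:ℤ)) (p:ℤ), ‖z‖ ^ k ≤ (N p) ^ p := by
      intro k hk
      have hm : k.natAbs ≤ p := hmemabs k hk
      have hNp : (N p) ^ k.natAbs ≤ (N p) ^ p := pow_le_pow_right₀ (hN1 p) hm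
      have h1le : (1:ℝ) ≤ (N p) ^ p := one_le_pow₀ (hN1 p)
      rcases hz with hz | hz
      · have ha : 0 < ‖z‖ := by rw [hz]; linarith
        refine le_trans (zpow_le_max ha k) (le_trans ?_ hNp)
        refine pow_le_pow_left₀ (le_max_iff.2 (Or.inl ha.le)) ?_ _
        refine max_le ?_ ?_
        · rw [hz]; exact le_max_left _ _
        · refine le_trans ?_ (hN1 p)
          rw [hz]
          rw [inv_le_one_iff₀]
          right; linarith
      · rcases eq_or_lt_of_le (norm_nonneg z) with ha0 | ha
        · -- ‖z‖ = 0
          rcases eq_or_ne k 0 with hk0 | hk0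
          · rw [hk0, zpow_zero]; exact h1le
          · rw [← ha0, zero_zpow k hk0]
            linarith
        · refine le_trans (zpow_le_max ha k) (le_trans ?_ hNp)
          refine pow_le_pow_left₀ (le_max_iff.2 (Or.inl ha.le)) ?_ _
          refine max_le ?_ ?_
          · refine le_trans ?_ (hN1 p)
            rw [hz]; linarith
          · rw [hz]
            exact le_max_of_le_right (le_max_right _ _)
    have hcrude : ∑ k ∈ Finset.Icc (-(p:ℤ)) (p:ℤ), ‖V k‖ * ‖z‖ ^ k ≤ S p := by
      rw [hSdef]
      simp only [Finset.sum_mul]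
      refine Finset.sum_le_sum fun k hk => ?_
      exact mul_le_mul_of_nonneg_left (hkey k hk) (norm_nonneg _)
    have hSle : S p ≤ ∑ q ∈ Finset.range p₀, S q :=
      Finset.single_le_sum (fun q _ => hS0 q) (Finset.mem_range.2 hpP)
    have : 0 ≤ ‖V 0‖ + Real.exp s * A :=
      add_nonneg (norm_nonneg _) (mul_nonneg (Real.exp_nonneg s) hA0)
    linarith [le_trans hred (le_trans hcrude hSle)]
  · -- asymptotic regime
    have hxε : x ≤ ε := hp₀ p hpP
    have hx1 : x < 1 := lt_of_le_of_lt hxε hε1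
    -- bound on ‖z‖ and its inverse
    have hcx0 : 0 ≤ c * x := by positivity
    have ha1 : ‖z‖ ≤ Real.exp (c * x) ∧ ‖z‖⁻¹ ≤ Real.exp (c * x) ∧ 0 < ‖z‖ := by
      have hexp1 : (1:ℝ) ≤ Real.exp (c * x) := Real.one_le_exp hcx0
      have hexpx : 1 + x ≤ Real.exp (c * x) := by
        have h1 : 1 + x ≤ Real.exp x := by
          have := Real.add_one_le_exp x; linarith
        refine le_trans h1 (Real.exp_le_exp.2 ?_)
        nlinarith
      rcases hz with hz | hz
      · refine ⟨by rw [hz]; exact hexpx, ?_, by rw [hz]; linarith⟩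
        rw [hz]
        refine le_trans ?_ hexp1
        rw [inv_le_one_iff₀]; right; linarith
      · have hzpos : 0 < ‖z‖ := by
          rw [hz]
          have : x ≤ ε := hxε
          simp only [hεdef] at this
          have h1c : 0 < 1 / c := by positivity
          linarith
        refine ⟨by rw [hz]; exact le_trans (by linarith) hexp1, ?_, hzpos⟩
        rw [hz, inv_le_iff_one_le_mul₀ (by rw [hz] at hzpos; exact hzpos)]
        have hexpcx : 1 + c * x ≤ Real.exp (c * x) := by
          have := Real.add_one_le_exp (c * x); linarith
        have hcxc1 : c * x ≤ c - 1 := by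
          have : c * x ≤ c * ε := by nlinarith
          have hce : c * ε = c - 1 := by
            simp only [hεdef]; field_simp
          linarith
        nlinarith
    obtain ⟨haz, hazinv, hapos⟩ := ha1
    -- pointwise bound
    have hkey : ∀ k ∈ Finset.Icc (-(p:ℤ)) (p:ℤ),
        ‖V k‖ * ‖z‖ ^ k ≤ (if k = 0 then ‖V 0‖ else 0)
          + Real.exp s * (|(k:ℝ)| ^ s * ‖V k‖) := by
      intro k hk
      rcases eq_or_ne k 0 with hk0 | hk0
      · subst hk0
        simp only [if_pos rfl, zpow_zero, mul_one]
        have : |((0:ℤ):ℝ)| ^ s = 0 := by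
          simp [Real.zero_rpow hs0.ne']
        rw [this]
        simp
      · rw [if_neg hk0, zero_add]
        have hm1 : 1 ≤ k.natAbs := Int.natAbs_pos.mpr hk0
        have hmp : k.natAbs ≤ p := hmemabs k hk
        have hm1R : (1:ℝ) ≤ (k.natAbs : ℝ) := by exact_mod_cast hm1
        have hmpR : ((k.natAbs : ℕ) : ℝ) ≤ (p:ℝ) := by exact_mod_cast hmp
        have hzk : ‖z‖ ^ k ≤ Real.exp s * |(k:ℝ)| ^ s := by
          have step1 : ‖z‖ ^ k ≤ (Real.exp (c * x)) ^ k.natAbs := by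
            refine le_trans (zpow_le_max hapos k) ?_
            exact pow_le_pow_left₀ (le_max_iff.2 (Or.inl hapos.le)) (max_le haz hazinv) _
          have step2 : (Real.exp (c * x)) ^ k.natAbs
              = Real.exp ((k.natAbs : ℝ) * (c * x)) := by
            rw [← Real.exp_nat_mul]
          have hcx : c * x = s * Real.log p / p := by
            simp only [hxdef, hcdef]
            field_simp
          have step3 : (k.natAbs : ℝ) * (c * x) ≤ s * (Real.log (k.natAbs) + 1) := by
            rw [hcx]
            have := klogp hm1R hmpR
            calc (k.natAbs : ℝ) * (s * Real.log p / p)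
                = s * ((k.natAbs : ℝ) * Real.log p / p) := by ring
              _ ≤ s * (Real.log (k.natAbs) + 1) := by
                  exact mul_le_mul_of_nonneg_left this hs0.le
          have step4 : Real.exp (s * (Real.log (k.natAbs) + 1))
              = Real.exp s * |(k:ℝ)| ^ s := by
            rw [natAbs_cast_abs, mul_add, mul_one, Real.exp_add,
              Real.rpow_def_of_pos (by linarith : (0:ℝ) < (k.natAbs:ℝ))]
            ring_nf
          calc ‖z‖ ^ k ≤ (Real.exp (c * x)) ^ k.natAbs := step1
            _ = Real.exp ((k.natAbs : ℝ) * (c * x)) := step2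
            _ ≤ Real.exp (s * (Real.log (k.natAbs) + 1)) := Real.exp_le_exp.2 step3
            _ = Real.exp s * |(k:ℝ)| ^ s := step4
        calc ‖V k‖ * ‖z‖ ^ k ≤ ‖V k‖ * (Real.exp s * |(k:ℝ)| ^ s) :=
              mul_le_mul_of_nonneg_left hzk (norm_nonneg _)
          _ = Real.exp s * (|(k:ℝ)| ^ s * ‖V k‖) := by ring
    have hsum : ∑ k ∈ Finset.Icc (-(p:ℤ)) (p:ℤ), ‖V k‖ * ‖z‖ ^ k
        ≤ ‖V 0‖ + Real.exp s * A := by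
      refine le_trans (Finset.sum_le_sum hkey) ?_
      rw [Finset.sum_add_distrib]
      have h0mem : (0:ℤ) ∈ Finset.Icc (-(p:ℤ)) (p:ℤ) := by
        rw [Finset.mem_Icc]; omega
      have e1 : ∑ k ∈ Finset.Icc (-(p:ℤ)) (p:ℤ), (if k = 0 then ‖V 0‖ else 0) = ‖V 0‖ := by
        rw [Finset.sum_ite_eq' _ (0:ℤ) (fun _ => ‖V 0‖), if_pos h0mem]
      rw [e1]
      have e2 : ∑ k ∈ Finset.Icc (-(p:ℤ)) (p:ℤ), Real.exp s * (|(k:ℝ)| ^ s * ‖V k‖)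
          ≤ Real.exp s * A := by
        rw [← Finset.mul_sum]
        refine mul_le_mul_of_nonneg_left ?_ (Real.exp_nonneg s)
        exact Summable.sum_le_tsum _ (fun k _ =>
          mul_nonneg (Real.rpow_nonneg (abs_nonneg _) s) (norm_nonneg _)) hs
      linarith
    have hSsum : 0 ≤ ∑ q ∈ Finset.range p₀, S q := Finset.sum_nonneg fun q _ => hS0 q
    linarith [le_trans hred hsum]
end

section
/- Let A and A' be m×m complex matrices of the form A_{kℓ} = Σ_j a_k b_j /((q_k − p_j)(p_j − q_ℓ)) and A'_{kℓ} = Σ_j a'_k b'_j /((q_k − p_j)(p_j − q_ℓ)) with a'_j = a_j q_j^{−1}, b'_j = b_j p_j (all p_j, q_k distinct nonzero complex numbers). Let h solve (I − A) h = B, where B_k = Σ_j a_k b_j/(q_k − p_j), and suppose det(I−A) ≠ 0. Then 1 − Σ_{k=1}^m h_k/q_k = det(I − A')/det(I − A). -/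
open Matrix

/-- Telescopic determinant identity: with `A_{kℓ} = Σ_j a_k b_j/((q_k−p_j)(p_j−q_ℓ))`,
`A'_{kℓ}` the same with `a'_j = a_j/q_j`, `b'_j = b_j p_j`, and `(I−A)h = B` where
`B_k = Σ_j a_k b_j/(q_k−p_j)`, one has `1 − Σ_k h_k/q_k = det(I−A')/det(I−A)`. -/
theorem telescopic_det_identity (mplus mminus : ℕ)
    (p : Fin mplus → ℂ) (q : Fin mminus → ℂ)
    (a : Fin mminus → ℂ) (b : Fin mplus → ℂ)
    (hp0 : ∀ j, p j ≠ 0) (hq0 : ∀ k, q k ≠ 0)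
    (hpinj : Function.Injective p) (hqinj : Function.Injective q)
    (hpq : ∀ j k, p j ≠ q k)
    (A A' : Matrix (Fin mminus) (Fin mminus) ℂ)
    (hA : A = Matrix.of fun k l => ∑ j, a k * b j / ((q k - p j) * (p j - q l)))
    (hA' : A' = Matrix.of fun k l => ∑ j, (a k / q k) * (b j * p j) / ((q k - p j) * (p j - q l)))
    (B : Fin mminus → ℂ) (hB : B = fun k => ∑ j, a k * b j / (q k - p j))
    (h : Fin mminus → ℂ) (hh : (1 - A).mulVec h = B)
    (hdet : (1 - A).det ≠ 0) :
    1 - ∑ k, h k / q k = (1 - A').det / (1 - A).det := by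
  classical
  set M : Matrix (Fin mminus) (Fin mminus) ℂ := 1 - A with hM
  set Δ : Matrix (Fin mminus) (Fin mminus) ℂ := Matrix.diagonal q with hΔ
  have hΔinv : Δ⁻¹ = Matrix.diagonal (fun k => (q k)⁻¹) := by
    apply Matrix.inv_eq_right_inv
    have e : (fun i => q i * (q i)⁻¹) = fun _ => (1 : ℂ) :=
      funext fun k => mul_inv_cancel₀ (hq0 k)
    rw [hΔ, Matrix.diagonal_mul_diagonal, e, Matrix.diagonal_one]
  set M' : Matrix (Fin mminus) (Fin mminus) ℂ := Δ⁻¹ * M * Δ with hM'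
  set y : Fin mminus → ℂ := fun k => -(B k / q k) with hy
  set z : Fin mminus → ℂ := fun k => -(h k / q k) with hz
  -- per-entry summation identity
  have Sid : ∀ k l, (∑ j, (a k / q k) * (b j * p j) / ((q k - p j) * (p j - q l)))
      = (q k)⁻¹ * (∑ j, a k * b j / ((q k - p j) * (p j - q l))) * q l
        + (∑ j, a k * b j / (q k - p j)) / q k := by
    intro k l
    rw [Finset.mul_sum, Finset.sum_mul, Finset.sum_div, ← Finset.sum_add_distrib]
    refine Finset.sum_congr rfl fun j _ => ?_
    have hq := hq0 k
    have h1 : q k - p j ≠ 0 := sub_ne_zero.2 (Ne.symm (hpq j k))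
    have h2 : p j - q l ≠ 0 := sub_ne_zero.2 (hpq j l)
    field_simp
    ring
  -- key entrywise identity
  have key : 1 - A' = M' + Matrix.replicateCol Unit y * Matrix.replicateRow Unit (fun _ => (1 : ℂ)) := by
    ext k l
    have e1 : (Matrix.replicateCol Unit y * Matrix.replicateRow Unit (fun _ => (1 : ℂ))) k l = y k := by
      simp [Matrix.mul_apply]
    have e2 : M' k l = (q k)⁻¹ * M k l * q l := by
      rw [hM', hΔinv, hΔ, Matrix.mul_diagonal, Matrix.diagonal_mul]
    have h1kl : (1 : Matrix (Fin mminus) (Fin mminus) ℂ) k l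
        = (q k)⁻¹ * (1 : Matrix (Fin mminus) (Fin mminus) ℂ) k l * q l := by
      rcases eq_or_ne k l with rfl | hkl
      · rw [Matrix.one_apply_eq, mul_one, inv_mul_cancel₀ (hq0 k)]
      · rw [Matrix.one_apply_ne hkl]
        ring
    rw [Matrix.add_apply, e1, e2]
    simp only [hM, Matrix.sub_apply, hA', hA, Matrix.of_apply, hy, hB]
    linear_combination h1kl - Sid k l
  -- M' * z = y
  have hMz : M' *ᵥ z = y := by
    have hΔz : Δ *ᵥ z = -h := by
      funext i
      simp only [hΔ, Matrix.mulVec_diagonal, hz, Pi.neg_apply]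
      rw [mul_neg, mul_comm, div_mul_cancel₀ _ (hq0 i)]
    have hMh : M *ᵥ (-h) = -B := by rw [Matrix.mulVec_neg, hh]
    rw [hM', ← Matrix.mulVec_mulVec, ← Matrix.mulVec_mulVec, hΔz, hMh, hΔinv]
    funext i
    simp only [Matrix.mulVec_diagonal, Pi.neg_apply, hy]
    field_simp
  have hdetΔ : Δ.det ≠ 0 := by
    rw [hΔ, Matrix.det_diagonal]
    exact Finset.prod_ne_zero_iff.2 fun k _ => hq0 k
  have hdetM' : M'.det = M.det := by
    rw [hM', Matrix.det_mul, Matrix.det_mul, Matrix.det_nonsing_inv, Ring.inverse_eq_inv']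
    field_simp
  have hdet' : (1 - A').det = M.det * (1 - ∑ k, h k / q k) := by
    have hsplit : M' + Matrix.replicateCol Unit y * Matrix.replicateRow Unit (fun _ => (1 : ℂ))
        = M' * (1 + Matrix.replicateCol Unit z * Matrix.replicateRow Unit (fun _ => (1 : ℂ))) := by
      rw [Matrix.mul_add, Matrix.mul_one, ← Matrix.mul_assoc, ← Matrix.replicateCol_mulVec, hMz]
    rw [key, hsplit, Matrix.det_mul, Matrix.det_one_add_replicateCol_mul_replicateRow, hdetM']
    congr 1
    simp only [dotProduct, one_mul, hz, sub_eq_add_neg, ← Finset.sum_neg_distrib]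
  rw [hdet', mul_comm, mul_div_assoc, div_self hdet, mul_one]
end
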